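/- The ratio n(y)/w(y) tends to 0 as y → ∞ along the cofinite filter on Δ_Γ; that is, for every ε > 0 the set {y ∈ Δ_Γ : y ≠ e and n(y)/w(y) ≥ ε} is finite. -/

import Mathlib

open Function

/-- The group `Δ_Γ = ⊕_Γ Δ` of finitely supported functions `Γ → Δ`
under pointwise multiplication, as a subgroup of `Γ → Δ`. -/
def DeltaGamma (Γ Δ : Type*) [Group Δ] : Subgroup (Γ → Δ) where
  carrier := {y | (mulSupport y).Finite}
  one_mem' := by simp [mulSupport_one]
  mul_mem' := by
    intro a b ha hb
    exact ((Set.Finite.union ha hb).subset (mulSupport_mul a b))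
  inv_mem' := by
    intro a ha
    simpa [mulSupport_inv] using ha

/-- The Bernoulli shift of `Γ` on `Δ_Γ`: `(s·y)(t) = y(s⁻¹t)`. -/
def bshift {Γ Δ : Type*} [Group Γ] [Group Δ] (s : Γ) (y : DeltaGamma Γ Δ) :
    DeltaGamma Γ Δ :=
  ⟨fun t => (y : Γ → Δ) (s⁻¹ * t), by
    have hy : (mulSupport (y : Γ → Δ)).Finite := y.2
    refine Set.Finite.subset (hy.image (fun t => s * t)) ?_
    intro t ht
    exact ⟨s⁻¹ * t, ht, by group⟩⟩

/-- A proper length function on a group. -/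
structure IsProperLength {G : Type*} [Group G] (l : G → ℝ) : Prop where
  nonneg : ∀ s, 0 ≤ l s
  eq_zero_iff : ∀ s, l s = 0 ↔ s = 1
  mul_le : ∀ s t, l (s * t) ≤ l s + l t
  inv_eq : ∀ s, l s⁻¹ = l s
  proper : ∀ R : ℝ, {s : G | l s ≤ R}.Finite

open Classical in
/-- `w(y,t) = l_Γ(t) + l_Δ(y t)` if `t ∈ supp y`, and `0` otherwise. -/
noncomputable def wt {Γ Δ : Type*} [Group Δ] (lG : Γ → ℝ) (lD : Δ → ℝ)
    (y : Γ → Δ) (t : Γ) : ℝ :=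
  if y t ≠ 1 then lG t + lD (y t) else 0

/-- `w(y) = Σ_t w(y,t)`. -/
noncomputable def w {Γ Δ : Type*} [Group Δ] (lG : Γ → ℝ) (lD : Δ → ℝ)
    (y : Γ → Δ) : ℝ :=
  ∑ᶠ t, wt lG lD y t

/-- `n(y)/w(y) → 0` as `y → ∞` along the cofinite filter on `Δ_Γ`:
for every `ε > 0`, the set `{y ∈ Δ_Γ : y ≠ e and n(y)/w(y) ≥ ε}` is finite,
where `n(y) = |supp y|`. -/
theorem stmt4 {Γ Δ : Type*} [Group Γ] [Group Δ] [Countable Γ] [Countable Δ]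
    (lG : Γ → ℝ) (lD : Δ → ℝ) (hG : IsProperLength lG) (hD : IsProperLength lD)
    (ε : ℝ) (hε : 0 < ε) :
    {y : DeltaGamma Γ Δ | y ≠ 1 ∧
      ε ≤ (Nat.card (mulSupport (y : Γ → Δ)) : ℝ) / w lG lD (y : Γ → Δ)}.Finite := by
  classical
  set FN : Finset Γ := (hG.proper (2 / ε)).toFinset with hFN
  set M : ℝ := 2 * (FN.card : ℝ) / ε with hM
  set TG : Set Γ := {t | lG t ≤ M} with hTG
  set TD : Set Δ := {d | lD d ≤ M} ∪ {1} with hTD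
  have hTGf : TG.Finite := hG.proper M
  have hTDf : TD.Finite := (hD.proper M).union (Set.finite_singleton 1)
  have hBig : {y : DeltaGamma Γ Δ |
      ∀ t, (y : Γ → Δ) t ≠ 1 → t ∈ TG ∧ (y : Γ → Δ) t ∈ TD}.Finite := by
    haveI := hTGf.to_subtype
    haveI := hTDf.to_subtype
    set F : DeltaGamma Γ Δ → (TG → TD) := fun y t =>
      if h : (y : Γ → Δ) t ∈ TD then ⟨_, h⟩ else ⟨1, Or.inr rfl⟩ with hF
    apply Set.Finite.of_finite_image (f := F) (Set.toFinite _)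
    intro y hy y' hy' hxy
    have key : ∀ z : DeltaGamma Γ Δ, (∀ t, (z : Γ → Δ) t ≠ 1 → t ∈ TG ∧ (z : Γ → Δ) t ∈ TD) →
        ∀ t, (z : Γ → Δ) t ∈ TD ∨ (z : Γ → Δ) t = 1 := by
      intro z hz t
      by_cases h : (z : Γ → Δ) t = 1
      · exact Or.inr h
      · exact Or.inl (hz t h).2
    apply Subtype.ext
    funext t
    by_cases ht : t ∈ TG
    · have h1 : (y : Γ → Δ) t ∈ TD := by
        rcases key y hy t with h | h
        · exact h
        · rw [h]; exact Or.inr rfl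
      have h2 : (y' : Γ → Δ) t ∈ TD := by
        rcases key y' hy' t with h | h
        · exact h
        · rw [h]; exact Or.inr rfl
      have := congrFun hxy ⟨t, ht⟩
      simp only [hF, dif_pos h1, dif_pos h2] at this
      exact congrArg Subtype.val this
    · have h1 : (y : Γ → Δ) t = 1 := by
        by_contra h
        exact ht (hy t h).1
      have h2 : (y' : Γ → Δ) t = 1 := by
        by_contra h
        exact ht (hy' t h).1
      rw [h1, h2]
  apply hBig.subset
  rintro y ⟨hy1, hyε⟩
  have hfin : (mulSupport (y : Γ → Δ)).Finite := y.2
  set s : Finset Γ := hfin.toFinset with hs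
  have hmem : ∀ t, t ∈ s ↔ (y : Γ → Δ) t ≠ 1 := by
    intro t
    simp [hs, Set.Finite.mem_toFinset, mulSupport]
  have hwt : ∀ t ∈ s, wt lG lD (y : Γ → Δ) t = lG t + lD ((y : Γ → Δ) t) := by
    intro t ht
    rw [wt, if_pos ((hmem t).1 ht)]
  have hwtnn : ∀ t, 0 ≤ wt lG lD (y : Γ → Δ) t := by
    intro t
    rw [wt]
    split
    · exact add_nonneg (hG.nonneg _) (hD.nonneg _)
    · exact le_rfl
  have hweq : w lG lD (y : Γ → Δ) = ∑ t ∈ s, wt lG lD (y : Γ → Δ) t := by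
    rw [w]
    apply finsum_eq_finset_sum_of_support_subset
    intro t ht
    have : (y : Γ → Δ) t ≠ 1 := by
      by_contra h
      simp [wt, h] at ht
    exact (hmem t).2 this
  set W : ℝ := w lG lD (y : Γ → Δ) with hW
  have hWnn : 0 ≤ W := by
    rw [hweq]
    exact Finset.sum_nonneg fun t _ => hwtnn t
  have hn : (Nat.card (mulSupport (y : Γ → Δ)) : ℝ) = (s.card : ℝ) := by
    rw [Nat.card_coe_set_eq, Set.ncard_eq_toFinset_card _ hfin]
  have hWpos : 0 < W := by
    rcases lt_or_eq_of_le hWnn with h | h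
    · exact h
    · exfalso
      rw [← h, div_zero] at hyε
      · exact absurd (lt_of_lt_of_le hε hyε) (lt_irrefl 0)
  have hεW : ε * W ≤ (s.card : ℝ) := by
    rw [← hn]
    exact (le_div_iff₀ hWpos).mp hyε
  -- lower bound on W from the sdiff part
  have hsd : ((s \ FN).card : ℝ) * (2 / ε) ≤ W := by
    calc ((s \ FN).card : ℝ) * (2 / ε) = (s \ FN).card • (2 / ε) := by
          rw [nsmul_eq_mul]
      _ ≤ ∑ t ∈ s \ FN, wt lG lD (y : Γ → Δ) t := by
          apply Finset.card_nsmul_le_sum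
          intro t ht
          have ht1 : t ∈ s := (Finset.sdiff_subset) ht
          have ht2 : ¬ lG t ≤ 2 / ε := by
            have := (Finset.mem_sdiff.mp ht).2
            simpa [hFN, Set.Finite.mem_toFinset] using this
          rw [hwt t ht1]
          have := hD.nonneg ((y : Γ → Δ) t)
          linarith [le_of_not_ge ht2]
      _ ≤ ∑ t ∈ s, wt lG lD (y : Γ → Δ) t := by
          apply Finset.sum_le_sum_of_subset_of_nonneg (Finset.sdiff_subset)
          intro t _ _
          exact hwtnn t
      _ = W := hweq.symm
  have hsplit : ((s.card : ℝ)) ≤ (FN.card : ℝ) + ((s \ FN).card : ℝ) := by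
    have h1 : (s ∩ FN).card + (s \ FN).card = s.card := Finset.card_inter_add_card_sdiff s FN
    have h2 : (s ∩ FN).card ≤ FN.card := Finset.card_le_card (Finset.inter_subset_right)
    push_cast [← h1]
    exact_mod_cast Nat.add_le_add_right h2 _
  have hB' : 2 * ((s \ FN).card : ℝ) ≤ ε * W := by
    have h := mul_le_mul_of_nonneg_left hsd hε.le
    have heq : ε * (((s \ FN).card : ℝ) * (2 / ε)) = 2 * ((s \ FN).card : ℝ) := by
      field_simp
    linarith [heq ▸ h]
  have hWM : W ≤ M := by
    rw [hM, le_div_iff₀ hε]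
    nlinarith
  -- conclude
  intro t ht
  have hts : t ∈ s := (hmem t).2 ht
  have hsingle : wt lG lD (y : Γ → Δ) t ≤ W := by
    rw [hweq]
    exact Finset.single_le_sum (fun t _ => hwtnn t) hts
  rw [hwt t hts] at hsingle
  constructor
  · show lG t ≤ M
    have := hD.nonneg ((y : Γ → Δ) t)
    linarith
  · left
    show lD ((y : Γ → Δ) t) ≤ M
    have := hG.nonneg t
    linarith
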